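/- (Projection on the support set, optimality for ℓ_p) Let T ⊆ {1,…,n} be nonempty and x|_T be the principal solution restricted to T (equal to x̂ on T and -∞ off T). Then for every x ∈ ℝ_max^n with supp(x) = T and A ⊞ x ≤ b, we have ‖b - A ⊞ x|_T‖_p^p ≤ ‖b - A ⊞ x‖_p^p, i.e., Σ_i (b_i - [A ⊞ x|_T]_i)^p ≤ Σ_i (b_i - [A ⊞ x]_i)^p for any fixed p ≥ 1. -/

import Mathlib

/-- Max-plus matrix-vector product over `ℝ_max = WithBot ℝ`:
`[A ⊞ x]_i = max_k (a_{ik} + x_k)` with `a + (-∞) = -∞`. -/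
noncomputable def maxPlus {m n : ℕ} (A : Fin m → Fin n → ℝ) (x : Fin n → WithBot ℝ)
    (i : Fin m) : WithBot ℝ :=
  Finset.univ.sup fun k => (A i k : WithBot ℝ) + x k

/-- The principal solution `x̂_j = min_i (b_i - a_{ij})`. -/
noncomputable def principalSol {m n : ℕ} (A : Fin (m + 1) → Fin n → ℝ)
    (b : Fin (m + 1) → ℝ) (j : Fin n) : ℝ :=
  Finset.univ.inf' Finset.univ_nonempty fun i => b i - A i j

/-- Projection on the support set: optimality for the ℓ_p error. -/
theorem projection_optimal_lp (m n : ℕ) (A : Fin (m + 1) → Fin (n + 1) → ℝ)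
    (b : Fin (m + 1) → ℝ) (p : ℝ) (hp : 1 ≤ p)
    (T : Finset (Fin (n + 1))) (hT : T.Nonempty)
    (x : Fin (n + 1) → WithBot ℝ)
    (hsupp : {j | x j ≠ ⊥} = (T : Set (Fin (n + 1))))
    (hsub : ∀ i, maxPlus A x i ≤ (b i : WithBot ℝ)) :
    ∑ i, (b i - (maxPlus A
        (fun j => if j ∈ T then ((principalSol A b j : ℝ) : WithBot ℝ) else ⊥) i).unbotD 0) ^ p
      ≤ ∑ i, (b i - (maxPlus A x i).unbotD 0) ^ p := by
  set y : Fin (n + 1) → WithBot ℝ :=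
    fun j => if j ∈ T then ((principalSol A b j : ℝ) : WithBot ℝ) else ⊥ with hy
  have hxy : ∀ j, x j ≤ y j := by
    intro j
    by_cases hj : j ∈ T
    · simp only [hy, if_pos hj]
      rcases eq_or_ne (x j) ⊥ with h | h
      · simp [h]
      · obtain ⟨r, hr⟩ := WithBot.ne_bot_iff_exists.mp h
        rw [← hr]
        refine WithBot.coe_le_coe.mpr ?_
        unfold principalSol
        rw [Finset.le_inf'_iff]
        intro i _
        have h0 : (A i j : WithBot ℝ) + x j ≤ maxPlus A x i :=
          Finset.le_sup (f := fun k => (A i k : WithBot ℝ) + x k) (Finset.mem_univ j)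
        have h1 : (A i j : WithBot ℝ) + x j ≤ (b i : WithBot ℝ) := le_trans h0 (hsub i)
        rw [← hr] at h1
        have h2 : A i j + r ≤ b i := by exact_mod_cast h1
        linarith
    · have hxj : x j = ⊥ := by
        by_contra h
        have : j ∈ ({j | x j ≠ ⊥} : Set _) := h
        rw [hsupp] at this
        exact hj this
      simp [hxj]
  have hmono : ∀ i, maxPlus A x i ≤ maxPlus A y i := by
    intro i
    apply Finset.sup_le
    intro k _
    exact le_trans (add_le_add_right (hxy k) _)
      (Finset.le_sup (f := fun k => (A i k : WithBot ℝ) + y k) (Finset.mem_univ k))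
  have hyb : ∀ i, maxPlus A y i ≤ (b i : WithBot ℝ) := by
    intro i
    apply Finset.sup_le
    intro k _
    by_cases hk : k ∈ T
    · simp only [hy, if_pos hk]
      rw [← WithBot.coe_add]
      refine WithBot.coe_le_coe.mpr ?_
      have : principalSol A b k ≤ b i - A i k := Finset.inf'_le _ (Finset.mem_univ i)
      linarith
    · simp [hy, hk]
  obtain ⟨j0, hj0⟩ := hT
  have hxj0 : x j0 ≠ ⊥ := by
    have : j0 ∈ ({j | x j ≠ ⊥} : Set _) := by rw [hsupp]; exact hj0
    exact this
  have hnbx : ∀ i, maxPlus A x i ≠ ⊥ := by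
    intro i
    obtain ⟨r, hr⟩ := WithBot.ne_bot_iff_exists.mp hxj0
    have hle : ((A i j0 + r : ℝ) : WithBot ℝ) ≤ maxPlus A x i := by
      have h : (A i j0 : WithBot ℝ) + x j0 ≤ maxPlus A x i :=
        Finset.le_sup (f := fun k => (A i k : WithBot ℝ) + x k) (Finset.mem_univ j0)
      rw [← hr] at h
      exact_mod_cast h
    intro hb
    rw [hb] at hle
    exact (WithBot.not_coe_le_bot _) hle
  have hnby : ∀ i, maxPlus A y i ≠ ⊥ := by
    intro i hb
    exact hnbx i (le_bot_iff.mp (hb ▸ hmono i))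
  apply Finset.sum_le_sum
  intro i _
  obtain ⟨u, hu⟩ := WithBot.ne_bot_iff_exists.mp (hnbx i)
  obtain ⟨v, hv⟩ := WithBot.ne_bot_iff_exists.mp (hnby i)
  have huv : u ≤ v := by
    have := hmono i
    rw [← hu, ← hv] at this
    exact_mod_cast this
  have hvb : v ≤ b i := by
    have := hyb i
    rw [← hv] at this
    exact_mod_cast this
  rw [← hu, ← hv]
  simp only [WithBot.unbotD_coe]
  exact Real.rpow_le_rpow (by linarith) (by linarith) (by linarith)
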